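/- arXiv:1112.0835 — 3 statements merged into one kernel-verified Lean document; each statement's English description precedes it below -/
import Mathlib

section
/- Suppose ρ(A) > 0 and ρ(A) < (λ_m + λ_2)/(λ_m − λ_2), and let W = I_m − αL with α a real number satisfying α > 0 and λ_2^{-1}(1 − ρ(A)^{-1}) < α < λ_m^{-1}(1 + ρ(A)^{-1}). Then every complex eigenvalue μ of W ⊗ A satisfies: either |μ| < 1, or μ is a complex eigenvalue of A with |μ| ≥ 1. Moreover, for every complex μ with |μ| ≥ 1, the algebraic multiplicity of μ as a root of the characteristic polynomial of W ⊗ A equals the algebraic multiplicity of μ as a root of the characteristic polynomial of A. -/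
open Matrix Kronecker Polynomial

section Aux

variable {R : Type*} [CommRing R]

lemma aux_eval_charpoly {n : Type*} [Fintype n] [DecidableEq n] (M : Matrix n n R) (t : R) :
    M.charpoly.eval t = (t • (1 : Matrix n n R) - M).det := by
  rw [Matrix.charpoly, ← Polynomial.coe_evalRingHom, RingHom.map_det]
  congr 1
  ext i j
  by_cases h : i = j <;>
    simp [Matrix.charmatrix_apply, Matrix.one_apply, h, Matrix.diagonal_apply]

lemma aux_eig_iff {n : Type*} [Fintype n] [DecidableEq n] {K : Type*} [Field K]
    (M : Matrix n n K) (μ : K) :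
    (∃ v, v ≠ 0 ∧ M.mulVec v = μ • v) ↔ M.charpoly.eval μ = 0 := by
  rw [aux_eval_charpoly, ← Matrix.exists_mulVec_eq_zero_iff]
  constructor
  · rintro ⟨v, hv, h⟩
    exact ⟨v, hv, by
      rw [Matrix.sub_mulVec, Matrix.smul_mulVec, Matrix.one_mulVec, h, sub_self]⟩
  · rintro ⟨v, hv, h⟩
    refine ⟨v, hv, ?_⟩
    rw [Matrix.sub_mulVec, Matrix.smul_mulVec, Matrix.one_mulVec, sub_eq_zero] at h
    exact h.symm

lemma aux_charpoly_conj {n : Type*} [Fintype n] [DecidableEq n] (U V M : Matrix n n R)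
    (hUV : U * V = 1) (hVU : V * U = 1) : (U * M * V).charpoly = M.charpoly := by
  have hmap : ∀ P Q : Matrix n n R, (P * Q).map (Polynomial.C : R → R[X])
      = P.map Polynomial.C * Q.map Polynomial.C := fun P Q =>
    Matrix.map_mul (f := (Polynomial.C : R →+* R[X]))
  have h1 : (U.map (Polynomial.C : R → R[X])) * (V.map Polynomial.C) = 1 := by
    rw [← hmap, hUV, Matrix.map_one _ (map_zero _) (map_one _)]
  have hs : (Matrix.scalar n (X : R[X])) = (X : R[X]) • (1 : Matrix n n R[X]) := by
    ext i j
    by_cases h : i = j <;> simp [Matrix.scalar_apply, Matrix.one_apply, Matrix.diagonal_apply, h]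
  have key : Matrix.charmatrix (U * M * V)
      = U.map Polynomial.C * Matrix.charmatrix M * V.map Polynomial.C := by
    rw [Matrix.charmatrix, Matrix.charmatrix, RingHom.mapMatrix_apply, RingHom.mapMatrix_apply,
      mul_sub, sub_mul, hs, mul_smul_comm, smul_mul_assoc, mul_one, h1, hmap, hmap]
  rw [Matrix.charpoly, key, Matrix.det_mul, Matrix.det_mul, Matrix.charpoly]
  have hdet : (U.map (Polynomial.C : R → R[X])).det * (V.map Polynomial.C).det = 1 := by
    rw [← Matrix.det_mul, h1, Matrix.det_one]
  calc (U.map (Polynomial.C : R → R[X])).det * (Matrix.charmatrix M).det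
        * (V.map Polynomial.C).det
      = (Matrix.charmatrix M).det
        * ((U.map (Polynomial.C : R → R[X])).det * (V.map Polynomial.C).det) := by ring
    _ = (Matrix.charmatrix M).det := by rw [hdet, mul_one]

lemma aux_map_kronecker {l n : Type*} [Fintype l] [Fintype n] {S : Type*} [CommRing S]
    (f : R → S) (hf : ∀ a b : R, f (a * b) = f a * f b) (P : Matrix l l R)
    (Q : Matrix n n R) :
    (P ⊗ₖ Q).map f = (P.map f) ⊗ₖ (Q.map f) := by
  ext ⟨i, a⟩ ⟨j, b⟩
  simp [Matrix.kroneckerMap_apply, hf]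

lemma aux_charpoly_blockDiagonal {o n : Type*} [Fintype o] [DecidableEq o] [Fintype n]
    [DecidableEq n] (d : o → Matrix n n R) :
    (Matrix.blockDiagonal d).charpoly = ∏ k, (d k).charpoly := by
  have key : Matrix.charmatrix (Matrix.blockDiagonal d)
      = Matrix.blockDiagonal (fun k => Matrix.charmatrix (d k)) := by
    ext ⟨i, k⟩ ⟨j, k'⟩
    by_cases h : k = k'
    · subst h
      by_cases hij : i = j
      · subst hij
        simp [Matrix.charmatrix_apply, Matrix.blockDiagonal_apply, Matrix.diagonal_apply]
      · simp [Matrix.charmatrix_apply, Matrix.blockDiagonal_apply, Matrix.diagonal_apply,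
          Prod.ext_iff, hij]
    · simp [Matrix.charmatrix_apply, Matrix.blockDiagonal_apply, Matrix.diagonal_apply,
        Prod.ext_iff, h]
  rw [Matrix.charpoly, key, Matrix.det_blockDiagonal]
  rfl

lemma aux_prod_map_mul_const {s : Multiset ℂ} (w : ℂ) (f : ℂ → ℂ) :
    (s.map fun r => w * f r).prod = w ^ Multiset.card s * (s.map f).prod := by
  induction s using Multiset.induction with
  | empty => simp
  | cons a s ih => simp [ih]; ring

lemma aux_charpoly_smul {n : Type*} [Fintype n] [DecidableEq n] (w : ℂ) (M : Matrix n n ℂ) :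
    (w • M).charpoly = (M.charpoly.roots.map (fun r => X - C (w * r))).prod := by
  have hsplit : M.charpoly.Splits := IsAlgClosed.splits _
  have hcard : Multiset.card M.charpoly.roots = Fintype.card n := by
    rw [(Polynomial.splits_iff_card_roots).mp hsplit, Matrix.charpoly_natDegree_eq_dim]
  apply Polynomial.funext
  intro t
  rw [aux_eval_charpoly, Polynomial.eval_multiset_prod, Multiset.map_map]
  simp only [Function.comp, Polynomial.eval_sub, Polynomial.eval_X, Polynomial.eval_C]
  by_cases hw : w = 0
  · subst hw
    simp only [zero_smul, sub_zero, zero_mul]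
    rw [Matrix.det_smul, Matrix.det_one, mul_one]
    rw [Multiset.map_const', Multiset.prod_replicate, hcard]
  · have hrw : t • (1 : Matrix n n ℂ) - w • M = w • ((w⁻¹ * t) • (1 : Matrix n n ℂ) - M) := by
      rw [smul_sub, smul_smul, ← mul_assoc, mul_inv_cancel₀ hw, one_mul]
    rw [hrw, Matrix.det_smul, ← aux_eval_charpoly]
    conv_lhs => rw [hsplit.eq_prod_roots_of_monic M.charpoly_monic]
    rw [Polynomial.eval_multiset_prod, Multiset.map_map]
    simp only [Function.comp, Polynomial.eval_sub, Polynomial.eval_X, Polynomial.eval_C]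
    have : (M.charpoly.roots.map fun r => t - w * r)
        = M.charpoly.roots.map fun r => w * (w⁻¹ * t - r) := by
      apply Multiset.map_congr rfl
      intro r _
      field_simp
    rw [this, aux_prod_map_mul_const, hcard]

lemma aux_diag_kronecker {o n : Type*} [Fintype o] [DecidableEq o] [Fintype n] [DecidableEq n]
    (w : o → R) (M : Matrix n n R) :
    (Matrix.diagonal w) ⊗ₖ M =
      Matrix.reindex (Equiv.prodComm n o) (Equiv.prodComm n o)
        (Matrix.blockDiagonal (fun k => w k • M)) := by
  ext ⟨i, a⟩ ⟨j, b⟩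
  by_cases h : i = j <;>
    simp [Matrix.kroneckerMap_apply, Matrix.diagonal_apply, Matrix.blockDiagonal_apply, h]

end Aux

/-- L is the Laplacian of a connected graph on m > 2 vertices with
eigenvalues 0 = λ₁ < λ₂ ≤ ⋯ ≤ λₘ.  Suppose 0 < ρ(A) < (λₘ + λ₂)/(λₘ − λ₂) and
W = I − αL with λ₂⁻¹(1 − ρ(A)⁻¹) < α < λₘ⁻¹(1 + ρ(A)⁻¹), α > 0.  Then every complex
eigenvalue μ of W ⊗ A satisfies |μ| < 1 or μ is an eigenvalue of A with |μ| ≥ 1;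
moreover for every μ with |μ| ≥ 1 the algebraic multiplicities of μ in W ⊗ A and in
A agree. -/
theorem stmt1 (m n : ℕ) (hm : 2 < m)
    (G : SimpleGraph (Fin m)) [DecidableRel G.Adj]
    (L : Matrix (Fin m) (Fin m) ℝ) (hL : L = G.lapMatrix ℝ)
    (hconn : G.Connected)
    -- the eigenvalues of L, listed in nondecreasing order
    (eig : Fin m → ℝ) (heig_mono : Monotone eig)
    (hchar : L.charpoly = ∏ i, (X - C (eig i)))
    (heig0 : eig ⟨0, by omega⟩ = 0) (heig1 : 0 < eig ⟨1, by omega⟩)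
    (A : Matrix (Fin n) (Fin n) ℝ)
    -- ρA is the spectral radius of A: the maximal modulus of complex eigenvalues
    (ρA : ℝ) (hρ_pos : 0 < ρA)
    (hρ_ub : ∀ μ : ℂ, (∃ v : Fin n → ℂ, v ≠ 0 ∧
        (A.map Complex.ofReal).mulVec v = μ • v) → ‖μ‖ ≤ ρA)
    (hρ_mem : ∃ μ : ℂ, (∃ v : Fin n → ℂ, v ≠ 0 ∧
        (A.map Complex.ofReal).mulVec v = μ • v) ∧ ‖μ‖ = ρA)
    (hspec : ρA < (eig ⟨m - 1, by omega⟩ + eig ⟨1, by omega⟩) /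
        (eig ⟨m - 1, by omega⟩ - eig ⟨1, by omega⟩))
    (α : ℝ) (hα_pos : 0 < α)
    (hα_lo : (eig ⟨1, by omega⟩)⁻¹ * (1 - ρA⁻¹) < α)
    (hα_hi : α < (eig ⟨m - 1, by omega⟩)⁻¹ * (1 + ρA⁻¹))
    (W : Matrix (Fin m) (Fin m) ℝ) (hW : W = 1 - α • L) :
    (∀ μ : ℂ, (∃ v : Fin m × Fin n → ℂ, v ≠ 0 ∧
        ((W ⊗ₖ A).map Complex.ofReal).mulVec v = μ • v) →
      ‖μ‖ < 1 ∨
        ((∃ v : Fin n → ℂ, v ≠ 0 ∧ (A.map Complex.ofReal).mulVec v = μ • v) ∧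
          1 ≤ ‖μ‖)) ∧
    (∀ μ : ℂ, 1 ≤ ‖μ‖ →
      (((W ⊗ₖ A).map Complex.ofReal).charpoly).rootMultiplicity μ =
        ((A.map Complex.ofReal).charpoly).rootMultiplicity μ) := by
  classical
  -- ordering facts about eig
  have heigM : 0 < eig ⟨m - 1, by omega⟩ :=
    lt_of_lt_of_le heig1 (heig_mono (by simp [Fin.le_def]; omega))
  have hw_bound : ∀ k : Fin m, k ≠ ⟨0, by omega⟩ → |1 - α * eig k| < ρA⁻¹ := by
    intro k hk
    have h0 : k.val ≠ 0 := by
      intro h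
      exact hk (by apply Fin.ext; simp [h])
    have hk1 : (⟨1, by omega⟩ : Fin m) ≤ k := by
      rw [Fin.le_def]
      show 1 ≤ k.val
      omega
    have hkpos : 0 < eig k := lt_of_lt_of_le heig1 (heig_mono hk1)
    have hkM : eig k ≤ eig ⟨m - 1, by omega⟩ := heig_mono (by
      rw [Fin.le_def]
      show k.val ≤ m - 1
      have := k.isLt
      omega)
    have hub : α * eig k < 1 + ρA⁻¹ := by
      have h1 : α * eig k ≤ α * eig ⟨m - 1, by omega⟩ :=
        mul_le_mul_of_nonneg_left hkM (le_of_lt hα_pos)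
      have h2 : α * eig ⟨m - 1, by omega⟩ < 1 + ρA⁻¹ := by
        have := mul_lt_mul_of_pos_right hα_hi heigM
        rwa [mul_comm ((eig ⟨m - 1, by omega⟩)⁻¹) (1 + ρA⁻¹), mul_assoc,
          inv_mul_cancel₀ (ne_of_gt heigM), mul_one] at this
      linarith
    have hlb : 1 - ρA⁻¹ < α * eig k := by
      by_cases hc : 1 - ρA⁻¹ ≤ 0
      · have := mul_pos hα_pos hkpos
        linarith
      · push_neg at hc
        have h1 : 1 - ρA⁻¹ < α * eig ⟨1, by omega⟩ := by
          have := mul_lt_mul_of_pos_right hα_lo heig1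
          rwa [mul_comm ((eig ⟨1, by omega⟩)⁻¹) (1 - ρA⁻¹), mul_assoc,
            inv_mul_cancel₀ (ne_of_gt heig1), mul_one] at this
        have h2 : α * eig ⟨1, by omega⟩ ≤ α * eig k :=
          mul_le_mul_of_nonneg_left (heig_mono hk1) (le_of_lt hα_pos)
        linarith
    rw [abs_lt]
    constructor <;> linarith
  -- spectral decomposition of L
  have hLH : L.IsHermitian := by
    rw [hL, Matrix.IsHermitian, Matrix.conjTranspose_eq_transpose_of_trivial]
    exact G.isSymm_lapMatrix (R := ℝ)
  set ev : Fin m → ℝ := hLH.eigenvalues with hev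
  set U : Matrix (Fin m) (Fin m) ℝ := (hLH.eigenvectorUnitary : Matrix (Fin m) (Fin m) ℝ)
    with hUdef
  have hUV : U * star U = 1 := Matrix.mem_unitaryGroup_iff.mp hLH.eigenvectorUnitary.2
  have hVU : star U * U = 1 := Matrix.mem_unitaryGroup_iff'.mp hLH.eigenvectorUnitary.2
  have hLspec : L = U * Matrix.diagonal ev * star U := by
    have h := hLH.spectral_theorem
    simpa [RCLike.ofReal_real_eq_id] using h
  have hWspec : W = U * Matrix.diagonal (fun k => 1 - α * ev k) * star U := by
    have hdiag : (1 : Matrix (Fin m) (Fin m) ℝ) - α • Matrix.diagonal ev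
        = Matrix.diagonal (fun k => 1 - α * ev k) := by
      ext i j
      by_cases h : i = j <;> simp [Matrix.diagonal_apply, Matrix.one_apply, h]
    rw [hW, hLspec, ← hdiag, Matrix.mul_sub, Matrix.sub_mul, Matrix.mul_one, hUV,
      Matrix.mul_smul, Matrix.smul_mul]
  -- charpoly of L via ev, and multiset equality with eig
  have hroots : ∀ g : Fin m → ℝ, (∏ i, (X - C (g i))).roots = Finset.univ.val.map g := by
    intro g
    have h : (∏ i, (X - C (g i)))
        = ((Finset.univ.val.map g).map fun a => X - C a).prod := by
      rw [Multiset.map_map]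
      rfl
    rw [h, Polynomial.roots_multiset_prod_X_sub_C]
  have hcharL : L.charpoly = ∏ i, (X - C (ev i)) := by
    rw [hLspec, aux_charpoly_conj U (star U) _ hUV hVU]
    have hcm : Matrix.charmatrix (Matrix.diagonal ev)
        = Matrix.diagonal (fun i => (X : ℝ[X]) - C (ev i)) := by
      ext i j
      by_cases h : i = j <;> simp [Matrix.charmatrix_apply, Matrix.diagonal_apply, h]
    rw [Matrix.charpoly, hcm, Matrix.det_diagonal]
  have hmultiset : Finset.univ.val.map ev = Finset.univ.val.map eig := by
    rw [← hroots ev, ← hroots eig, ← hcharL, ← hchar]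
  -- complex side
  set Ac : Matrix (Fin n) (Fin n) ℂ := A.map Complex.ofReal with hAcdef
  set ρs : Multiset ℂ := Ac.charpoly.roots with hρsdef
  have hroot_abs : ∀ r ∈ ρs, ‖r‖ ≤ ρA := by
    intro r hr
    have h0 : Ac.charpoly.eval r = 0 := Polynomial.isRoot_of_mem_roots hr
    exact hρ_ub r ((aux_eig_iff Ac r).mpr h0)
  -- the Kronecker charpoly
  set Uc : Matrix (Fin m) (Fin m) ℂ := U.map Complex.ofReal with hUcdef
  set Vc : Matrix (Fin m) (Fin m) ℂ := (star U).map Complex.ofReal with hVcdef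
  have hmapmul : ∀ P Q : Matrix (Fin m) (Fin m) ℝ,
      (P * Q).map Complex.ofReal = P.map Complex.ofReal * Q.map Complex.ofReal := fun P Q =>
    Matrix.map_mul (f := Complex.ofRealHom)
  have hUVc : Uc * Vc = 1 := by
    rw [hUcdef, hVcdef, ← hmapmul, hUV, Matrix.map_one Complex.ofReal Complex.ofReal_zero Complex.ofReal_one]
  have hVUc : Vc * Uc = 1 := by
    rw [hUcdef, hVcdef, ← hmapmul, hVU, Matrix.map_one Complex.ofReal Complex.ofReal_zero Complex.ofReal_one]
  set w : Fin m → ℂ := fun k => 1 - (α : ℂ) * (ev k : ℂ) with hwdef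
  have hWc : W.map Complex.ofReal = Uc * Matrix.diagonal w * Vc := by
    rw [hWspec, hmapmul, hmapmul]
    congr 1
    congr 1
    rw [Matrix.diagonal_map (by simp)]
    congr 1
    funext k
    simp [hwdef]
  have hMc : ((W ⊗ₖ A).map Complex.ofReal).charpoly
      = (Matrix.blockDiagonal (fun k => w k • Ac)).charpoly := by
    rw [aux_map_kronecker Complex.ofReal Complex.ofReal_mul, ← hAcdef]
    have hWc' : (W.map Complex.ofReal) ⊗ₖ Ac
        = (Uc ⊗ₖ (1 : Matrix (Fin n) (Fin n) ℂ)) * ((Matrix.diagonal w) ⊗ₖ Ac)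
          * (Vc ⊗ₖ (1 : Matrix (Fin n) (Fin n) ℂ)) := by
      rw [← Matrix.mul_kronecker_mul, ← Matrix.mul_kronecker_mul, ← hWc, mul_one, one_mul]
    rw [hWc', aux_charpoly_conj _ _ _ ?huv ?hvu]
    · rw [aux_diag_kronecker, Matrix.charpoly_reindex]
    · rw [← Matrix.mul_kronecker_mul, hUVc, one_mul, Matrix.one_kronecker_one]
    · rw [← Matrix.mul_kronecker_mul, hVUc, one_mul, Matrix.one_kronecker_one]
  -- the big multiset of roots
  set S : Multiset ℂ :=
    Finset.univ.val.bind (fun k : Fin m => ρs.map fun r => (1 - (α : ℂ) * (eig k : ℂ)) * r)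
    with hSdef
  have hbig : ((W ⊗ₖ A).map Complex.ofReal).charpoly = (S.map fun c => X - C c).prod := by
    rw [hMc, aux_charpoly_blockDiagonal]
    have h1 : ∀ k : Fin m, (w k • Ac).charpoly = ((ρs.map fun r => w k * r).map
        fun c => X - C c).prod := by
      intro k
      rw [aux_charpoly_smul, ← hρsdef, Multiset.map_map]
      rfl
    calc (∏ k, (w k • Ac).charpoly)
        = (Finset.univ.val.map fun k : Fin m =>
            ((ρs.map fun r => w k * r).map fun c => X - C c).prod).prod := by
          rw [Finset.prod]
          exact congrArg _ (Multiset.map_congr rfl fun k _ => h1 k)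
      _ = ((Finset.univ.val.bind fun k : Fin m =>
            (ρs.map fun r => w k * r)).map fun c => X - C c).prod := by
          rw [Multiset.map_bind, Multiset.prod_bind]
      _ = (S.map fun c => X - C c).prod := by
          congr 1
          congr 1
          rw [hSdef]
          have h2 : (Finset.univ.val.bind fun k : Fin m => (ρs.map fun r => w k * r))
              = (Finset.univ.val.map ev).bind
                  (fun d : ℝ => ρs.map fun r => (1 - (α : ℂ) * (d : ℂ)) * r) := by
            rw [Multiset.bind_map]
          have h3 : (Finset.univ.val.map eig).bind
                (fun d : ℝ => ρs.map fun r => (1 - (α : ℂ) * (d : ℂ)) * r)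
              = Finset.univ.val.bind
                  (fun k : Fin m => ρs.map fun r => (1 - (α : ℂ) * (eig k : ℂ)) * r) := by
            rw [Multiset.bind_map]
          rw [h2, hmultiset, h3]
  have hrootsMc : ((W ⊗ₖ A).map Complex.ofReal).charpoly.roots = S := by
    rw [hbig, Polynomial.roots_multiset_prod_X_sub_C]
  -- modulus bound for factors with k ≠ 0
  have habs_w : ∀ k : Fin m, k ≠ ⟨0, by omega⟩ → ∀ r ∈ ρs,
      ‖(1 - (α : ℂ) * (eig k : ℂ)) * r‖ < 1 := by
    intro k hk r hr
    have h1 : ‖(1 : ℂ) - (α : ℂ) * (eig k : ℂ)‖ = |1 - α * eig k| := by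
      rw [← Real.norm_eq_abs, ← Complex.norm_real]
      congr 1
      push_cast
      ring
    have h2 := hw_bound k hk
    have h3 := hroot_abs r hr
    rw [norm_mul, h1]
    have h4 : |1 - α * eig k| * ‖r‖ ≤ |1 - α * eig k| * ρA :=
      mul_le_mul_of_nonneg_left h3 (abs_nonneg _)
    have h5 : |1 - α * eig k| * ρA < ρA⁻¹ * ρA := mul_lt_mul_of_pos_right h2 hρ_pos
    rw [inv_mul_cancel₀ (ne_of_gt hρ_pos)] at h5
    linarith
  constructor
  · -- Part 1
    intro μ hμ
    have h0 : ((W ⊗ₖ A).map Complex.ofReal).charpoly.eval μ = 0 :=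
      (aux_eig_iff _ μ).mp hμ
    have hμS : μ ∈ S := by
      rw [← hrootsMc]
      exact Polynomial.mem_roots'.mpr ⟨(Matrix.charpoly_monic _).ne_zero, h0⟩
    rcases Multiset.mem_bind.mp hμS with ⟨k, -, hkmem⟩
    rcases Multiset.mem_map.mp hkmem with ⟨r, hr, hμeq⟩
    by_cases hk : k = ⟨0, by omega⟩
    · have hz : eig k = 0 := by rw [hk]; exact heig0
      have hμr : μ = r := by rw [← hμeq, hz]; push_cast; ring
      by_cases habs : ‖μ‖ < 1
      · exact Or.inl habs
      · refine Or.inr ⟨?_, le_of_not_gt habs⟩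
        rw [hμr]
        exact (aux_eig_iff Ac r).mpr (Polynomial.isRoot_of_mem_roots hr)
    · exact Or.inl (by rw [← hμeq]; exact habs_w k hk r hr)
  · -- Part 2
    intro μ hμ
    rw [← Polynomial.count_roots, ← Polynomial.count_roots, hrootsMc, ← hρsdef, hSdef]
    rw [Multiset.count_bind]
    have hterm : ∀ k : Fin m,
        Multiset.count μ (ρs.map fun r => (1 - (α : ℂ) * (eig k : ℂ)) * r)
          = if k = (⟨0, by omega⟩ : Fin m) then ρs.count μ else 0 := by
      intro k
      by_cases hk : k = (⟨0, by omega⟩ : Fin m)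
      · rw [if_pos hk, hk, heig0]
        have : (ρs.map fun r => (1 - (α : ℂ) * ((0 : ℝ) : ℂ)) * r) = ρs.map id := by
          apply Multiset.map_congr rfl
          intro r _
          push_cast
          ring_nf
          rfl
        rw [this, Multiset.map_id]
      · rw [if_neg hk, Multiset.count_eq_zero]
        intro hmem
        rcases Multiset.mem_map.mp hmem with ⟨r, hr, hμeq⟩
        have := habs_w k hk r hr
        rw [hμeq] at this
        linarith
    have hmapeq : (Finset.univ.val.map fun k : Fin m =>
          Multiset.count μ (ρs.map fun r => (1 - (α : ℂ) * (eig k : ℂ)) * r))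
        = Finset.univ.val.map fun k : Fin m =>
            if k = (⟨0, by omega⟩ : Fin m) then ρs.count μ else 0 :=
      Multiset.map_congr rfl fun k _ => hterm k
    rw [hmapeq]
    have : (Finset.univ.val.map fun k : Fin m =>
          if k = (⟨0, by omega⟩ : Fin m) then ρs.count μ else 0).sum
        = ∑ k : Fin m, if k = (⟨0, by omega⟩ : Fin m) then ρs.count μ else 0 := rfl
    rw [this, Finset.sum_ite_eq' Finset.univ (⟨0, by omega⟩ : Fin m)
      (fun _ => ρs.count μ), if_pos (Finset.mem_univ _)]
end

section
/- Let W ∈ ℝ^{m×m} be symmetric with W𝟙 = 𝟙, such that the eigenvalue 1 of W has algebraic multiplicity one and every other eigenvalue of W has modulus strictly less than 1. Fix i ∈ {1, …, m}. Then every x ∈ ℝ^m satisfying e_i^T W^j x = 0 for all j = 0, 1, …, m−1 also satisfies 𝟙^T x = 0. -/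
open Matrix Polynomial

lemma charpoly_conj_aux {n : Type*} [Fintype n] [DecidableEq n]
    (U D V : Matrix n n ℝ) (hUV : U * V = 1) (hVU : V * U = 1) :
    (U * D * V).charpoly = D.charpoly := by
  have hmap : ∀ A B : Matrix n n ℝ, A * B = 1 → (A.map C) * (B.map C) = (1 : Matrix n n ℝ[X]) := by
    intro A B h
    rw [← Matrix.map_mul, h, Matrix.map_one _ (map_zero C) (map_one C)]
  have hU := hmap U V hUV
  have hV := hmap V U hVU
  have hc : charmatrix (U * D * V) = (U.map C) * charmatrix D * (V.map C) := by
    unfold charmatrix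
    simp only [RingHom.mapMatrix_apply]
    rw [Matrix.mul_sub, Matrix.sub_mul]
    congr 1
    · rw [← (Matrix.scalar_commute (X : ℝ[X]) (fun r => Commute.all X r) (U.map C)).eq,
        Matrix.mul_assoc, hU, Matrix.mul_one]
    · rw [← Matrix.map_mul, ← Matrix.map_mul]
  unfold Matrix.charpoly
  rw [hc, det_mul, det_mul, mul_comm ((U.map C).det), mul_assoc, ← det_mul, hU,
    det_one, mul_one]

lemma charpoly_diagonal_aux {n : Type*} [Fintype n] [DecidableEq n] (d : n → ℝ) :
    (Matrix.diagonal d).charpoly = ∏ i, (X - C (d i)) := by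
  have hc : charmatrix (Matrix.diagonal d) = Matrix.diagonal (fun i => X - C (d i)) := by
    ext i j
    by_cases h : i = j
    · subst h; simp [charmatrix_apply_eq, Matrix.diagonal_apply_eq]
    · simp [charmatrix_apply_ne _ _ _ h, Matrix.diagonal_apply_ne _ h]
  rw [Matrix.charpoly, hc, Matrix.det_diagonal]

lemma rootMult_prod_aux {n : Type*} [Fintype n] [DecidableEq n] (d : n → ℝ) (a : ℝ) :
    (∏ i, (X - C (d i))).rootMultiplicity a = (Finset.univ.filter (fun i => d i = a)).card := by
  classical
  have hne : (∏ i, (X - C (d i))) ≠ 0 :=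
    Finset.prod_ne_zero_iff.mpr (fun i _ => X_sub_C_ne_zero (d i))
  rw [← Polynomial.count_roots, Polynomial.roots_prod _ _ hne]
  simp only [Polynomial.roots_X_sub_C]
  rw [Multiset.count_bind, Finset.card_filter, Finset.sum]
  congr 1
  ext i
  simp [Multiset.count_singleton, eq_comm]

lemma sum_mulVec_aux {n ι : Type*} [Fintype n] (s : Finset ι)
    (A : ι → Matrix n n ℝ) (v : n → ℝ) :
    (∑ j ∈ s, A j) *ᵥ v = ∑ j ∈ s, (A j) *ᵥ v := by
  ext idx
  simp only [Matrix.mulVec, dotProduct, Finset.sum_apply, Matrix.sum_apply, Finset.sum_mul]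
  rw [Finset.sum_comm]

/-- Let W ∈ ℝ^{m×m} be symmetric with W𝟙 = 𝟙, such that the eigenvalue 1
of W has algebraic multiplicity one and every other (complex) eigenvalue of W has
modulus strictly less than 1.  Fix i.  Then every x ∈ ℝ^m with eᵢᵀ Wʲ x = 0 for
j = 0, …, m−1 also satisfies 𝟙ᵀ x = 0. -/
theorem stmt3 (m : ℕ) (W : Matrix (Fin m) (Fin m) ℝ)
    (hsym : W.IsSymm)
    (hones : W.mulVec (fun _ => 1) = fun _ => 1)
    (halg : (Matrix.charpoly W).rootMultiplicity 1 = 1)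
    (hspec : ∀ μ : ℂ, (∃ v : Fin m → ℂ, v ≠ 0 ∧
        (W.map Complex.ofReal).mulVec v = μ • v) → μ = 1 ∨ ‖μ‖ < 1)
    (i : Fin m) (x : Fin m → ℝ)
    (hx : ∀ j : ℕ, j < m → ((W ^ j).mulVec x) i = 0) :
    ∑ k, x k = 0 := by
  classical
  have hA : W.IsHermitian := by
    ext a c; have := congrFun (congrFun hsym.eq a) c; simpa [Matrix.conjTranspose_apply] using this
  set ev := hA.eigenvalues with hev
  set b := hA.eigenvectorBasis with hb
  -- characteristic polynomial in terms of eigenvalues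
  have hchar : W.charpoly = ∏ k, (X - C (ev k)) := by
    set U : Matrix (Fin m) (Fin m) ℝ := (hA.eigenvectorUnitary : Matrix (Fin m) (Fin m) ℝ) with hUdef
    have hU1 : U * star U = 1 := Matrix.mem_unitaryGroup_iff.mp hA.eigenvectorUnitary.2
    have hU2 : star U * U = 1 := Matrix.mem_unitaryGroup_iff'.mp hA.eigenvectorUnitary.2
    have h := hA.spectral_theorem
    rw [show (RCLike.ofReal ∘ hA.eigenvalues : Fin m → ℝ) = ev by ext k; simp [hev]] at h
    calc W.charpoly = (U * Matrix.diagonal ev * star U).charpoly := by rw [h, Unitary.conjStarAlgAut_apply]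
      _ = (Matrix.diagonal ev).charpoly := charpoly_conj_aux _ _ _ hU1 hU2
      _ = ∏ k, (X - C (ev k)) := charpoly_diagonal_aux ev
  have hcount : (Finset.univ.filter (fun k => ev k = 1)).card = 1 := by
    rw [← rootMult_prod_aux, ← hchar]; exact halg
  obtain ⟨k0, hk0⟩ := Finset.card_eq_one.mp hcount
  have hevne : ∀ k, k ≠ k0 → ev k ≠ 1 := by
    intro k hk h1
    have : k ∈ ({k0} : Finset (Fin m)) := hk0 ▸ (by simp [h1])
    exact hk (Finset.mem_singleton.mp this)
  -- eigenvector dot-product facts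
  have hdot : ∀ (y : Fin m → ℝ), W *ᵥ y = y → ∀ k, ⇑(b k) ⬝ᵥ y = ev k * (⇑(b k) ⬝ᵥ y) := by
    intro y hy k
    conv_lhs => rw [← hy]
    rw [Matrix.dotProduct_mulVec]
    have hvm : ⇑(b k) ᵥ* W = W *ᵥ ⇑(b k) := by
      conv_lhs => rw [← hsym.eq]
      rw [Matrix.vecMul_transpose]
    rw [hvm, hA.mulVec_eigenvectorBasis, smul_dotProduct, smul_eq_mul]
  -- kernel of W - 1 is spanned by b k0
  have hker : ∀ (y : Fin m → ℝ), W *ᵥ y = y → y = (⇑(b k0) ⬝ᵥ y) • ⇑(b k0) := by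
    intro y hy
    set r := ⇑(b k0) ⬝ᵥ y with hr
    have hbb : ∀ k, ⇑(b k) ⬝ᵥ ⇑(b k0) = if k = k0 then 1 else 0 := by
      intro k
      have := orthonormal_iff_ite.mp b.orthonormal k k0
      rw [dotProduct_comm]
      simpa [PiLp.inner_apply, dotProduct] using this
    have hzero : ∀ k, ⇑(b k) ⬝ᵥ (y - r • ⇑(b k0)) = 0 := by
      intro k
      rw [dotProduct_sub, dotProduct_smul, smul_eq_mul]
      by_cases hk : k = k0
      · subst hk; simp [hbb, hr]
      · have h1 : ⇑(b k) ⬝ᵥ y = 0 := by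
          have h2 := hdot y hy k
          have hne : ev k ≠ 1 := hevne k hk
          have h3 : (1 - ev k) * (⇑(b k) ⬝ᵥ y) = 0 := by linarith
          rcases mul_eq_zero.mp h3 with h4 | h4
          · exact absurd (by linarith : ev k = 1) hne
          · exact h4
        simp [hbb, hk, h1]
    have hz : (WithLp.toLp 2 (y - r • ⇑(b k0)) : EuclideanSpace ℝ (Fin m)) = 0 := by
      have h0 : b.repr (WithLp.toLp 2 (y - r • ⇑(b k0)) : EuclideanSpace ℝ (Fin m)) = 0 := by
        ext k
        rw [b.repr_apply_apply]
        simpa [PiLp.inner_apply, dotProduct] using (dotProduct_comm _ _).symm.trans (hzero k)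
      have := congrArg b.repr.symm h0
      simpa using this
    have hz' : y - r • ⇑(b k0) = (0 : Fin m → ℝ) := by simpa using congrArg WithLp.ofLp hz
    funext idx
    have := congrFun hz' idx
    simp only [Pi.sub_apply, Pi.smul_apply, Pi.zero_apply, smul_eq_mul] at this ⊢
    linarith
  -- polynomial q
  set p := W.charpoly with hp
  have hpm : p.Monic := W.charpoly_monic
  have hp0 : p ≠ 0 := hpm.ne_zero
  have hroot : p.IsRoot 1 := by
    rw [← Polynomial.rootMultiplicity_pos hp0]; omega
  set q := p /ₘ (X - C 1) with hq
  have hfac : (X - C 1) * q = p := (Polynomial.mul_divByMonic_eq_iff_isRoot).mpr hroot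
  have hq0 : q ≠ 0 := by
    intro h; rw [h, mul_zero] at hfac; exact hp0 hfac.symm
  have hqe : q.eval 1 ≠ 0 := by
    intro h
    have hrq : 0 < q.rootMultiplicity 1 :=
      (Polynomial.rootMultiplicity_pos hq0).mpr h
    have hmul := Polynomial.rootMultiplicity_mul (p := X - C 1) (q := q)
      (by rw [hfac]; exact hp0) (x := 1)
    rw [hfac, Polynomial.rootMultiplicity_X_sub_C_self] at hmul
    omega
  have hm0 : 0 < m := Fin.pos i
  have hdeg : q.natDegree < m := by
    have h1 : p.natDegree = m := by
      rw [hp, Matrix.charpoly_natDegree_eq_dim, Fintype.card_fin]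
    have h2 : q.natDegree = p.natDegree - 1 := by
      rw [hq, Polynomial.natDegree_divByMonic _ (Polynomial.monic_X_sub_C 1),
        Polynomial.natDegree_X_sub_C]
    omega
  -- the vector y
  set M := Polynomial.aeval W q with hM
  set y := M *ᵥ x with hy
  have hMsum : M = ∑ j ∈ Finset.range (q.natDegree + 1), q.coeff j • W ^ j := by
    rw [hM, Polynomial.aeval_eq_sum_range]
  have hWy : W *ᵥ y = y := by
    have hcayley : Polynomial.aeval W p = 0 := Matrix.aeval_self_charpoly W
    have hWM : (W - 1) * M = 0 := by
      have : W - 1 = Polynomial.aeval W (X - C 1 : ℝ[X]) := by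
        rw [map_sub, Polynomial.aeval_X, Polynomial.aeval_C, _root_.map_one]
      rw [this, hM, ← _root_.map_mul, hfac, hcayley]
    have h2 : W * M = M := by
      have := sub_eq_zero.mpr hWM.symm
      rw [sub_mul, one_mul] at hWM
      linear_combination (norm := noncomm_ring) hWM
    rw [hy, Matrix.mulVec_mulVec, h2]
  have hyi : y i = 0 := by
    rw [hy, hMsum, sum_mulVec_aux]
    rw [Finset.sum_apply]
    apply Finset.sum_eq_zero
    intro j hj
    rw [Matrix.smul_mulVec, Pi.smul_apply, smul_eq_mul,
      hx j (by have := Finset.mem_range.mp hj; omega), mul_zero]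
  -- b k0 component
  have h1ker := hker (fun _ => 1) hones
  have hbk0i : ⇑(b k0) i ≠ 0 := by
    intro h
    have := congrFun h1ker i
    simp [h] at this
  have hr0 : ⇑(b k0) ⬝ᵥ y = 0 := by
    have h2 := congrFun (hker y hWy) i
    rw [hyi] at h2
    have h5 := h2.symm
    rw [Pi.smul_apply, smul_eq_mul] at h5
    rcases mul_eq_zero.mp h5 with h3 | h3
    · exact h3
    · exact absurd h3 hbk0i
  have hy0 : y = 0 := by
    rw [hker y hWy, hr0, zero_smul]
  -- powers fix the all-ones vector
  have hpow : ∀ j : ℕ, (W ^ j) *ᵥ (fun _ => (1:ℝ)) = fun _ => 1 := by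
    intro j
    induction j with
    | zero => simp
    | succ n ih => rw [pow_succ, ← Matrix.mulVec_mulVec, hones, ih]
  have hM1 : M *ᵥ (fun _ => (1:ℝ)) = q.eval 1 • (fun _ => (1:ℝ)) := by
    rw [hMsum, sum_mulVec_aux]
    have : q.eval 1 = ∑ j ∈ Finset.range (q.natDegree + 1), q.coeff j * 1 ^ j :=
      Polynomial.eval_eq_sum_range (p := q) 1
    rw [this, Finset.sum_smul]
    apply Finset.sum_congr rfl
    intro j _
    rw [Matrix.smul_mulVec, hpow j, one_pow, mul_one]
  -- M is symmetric
  have hMT : Mᵀ = M := by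
    rw [hMsum, Matrix.transpose_sum]
    apply Finset.sum_congr rfl
    intro j _
    rw [Matrix.transpose_smul, Matrix.transpose_pow, hsym.eq]
  -- conclude
  have hfinal : (fun _ => (1:ℝ)) ⬝ᵥ y = q.eval 1 * ((fun _ => (1:ℝ)) ⬝ᵥ x) := by
    have hvm1 : (fun _ => (1:ℝ)) ᵥ* M = M *ᵥ (fun _ => (1:ℝ)) := by
      conv_lhs => rw [← hMT]
      rw [Matrix.vecMul_transpose]
    rw [hy, Matrix.dotProduct_mulVec, hvm1, hM1, smul_dotProduct, smul_eq_mul]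
  rw [hy0] at hfinal
  simp only [dotProduct_zero] at hfinal
  have : (fun _ => (1:ℝ)) ⬝ᵥ x = 0 := by
    rcases mul_eq_zero.mp hfinal.symm with h | h
    · exact absurd h hqe
    · exact h
  simp only [dotProduct, one_mul] at this
  exact this
end

section
/- Let W ∈ ℝ^{m×m} satisfy W𝟙 = 𝟙, let A ∈ ℝ^{n×n}, and let C_i ∈ ℝ^{r_i×n} for i = 1,…,m. If the pair (A, C) is not detectable — i.e., there exist a complex λ with |λ| ≥ 1 and a nonzero v ∈ ℂ^n with Av = λv and C_i v = 0 for all i — then the pair (W ⊗ A, C̄) is not detectable: the nonzero vector 𝟙 ⊗ v satisfies (W ⊗ A)(𝟙 ⊗ v) = λ(𝟙 ⊗ v) and C̄(𝟙 ⊗ v) = 0. -/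
open Matrix Kronecker

/-- The Kronecker product of two vectors: `(vecKron v w) (i, j) = v i * w j`. -/
def vecKron {m n : ℕ} {F : Type*} [Mul F] (v : Fin m → F) (w : Fin n → F) :
    Fin m × Fin n → F :=
  fun p => v p.1 * w p.2

/-- The block-diagonal matrix C̄ whose i-th diagonal block is `C i`
(equivalently, whose i-th block row is eᵢᵀ ⊗ Cᵢ), complexified. -/
def Cbar {m n : ℕ} (r : Fin m → ℕ) (C : ∀ i : Fin m, Matrix (Fin (r i)) (Fin n) ℝ) :
    Matrix (Σ i : Fin m, Fin (r i)) (Fin m × Fin n) ℂ :=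
  fun q p => if q.1 = p.1 then ((C q.1).map Complex.ofReal) q.2 p.2 else 0

/-- Let W ∈ ℝ^{m×m} with W𝟙 = 𝟙, A ∈ ℝ^{n×n}, Cᵢ ∈ ℝ^{rᵢ×n}.  If
(A, C) is not detectable, witnessed by λ ∈ ℂ with |λ| ≥ 1 and 0 ≠ v ∈ ℂⁿ with
Av = λv and Cᵢv = 0 for all i, then the nonzero vector 𝟙 ⊗ v satisfies
(W ⊗ A)(𝟙 ⊗ v) = λ(𝟙 ⊗ v) and C̄(𝟙 ⊗ v) = 0, so (W ⊗ A, C̄) is not detectable. -/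
theorem stmt9 (m n : ℕ) (hm : 0 < m) (r : Fin m → ℕ)
    (W : Matrix (Fin m) (Fin m) ℝ)
    (hW1 : W.mulVec (fun _ => 1) = fun _ => 1)
    (A : Matrix (Fin n) (Fin n) ℝ)
    (C : ∀ i : Fin m, Matrix (Fin (r i)) (Fin n) ℝ)
    (lam : ℂ) (hlam : 1 ≤ ‖lam‖)
    (v : Fin n → ℂ) (hv : v ≠ 0)
    (hAv : (A.map Complex.ofReal).mulVec v = lam • v)
    (hCv : ∀ i, ((C i).map Complex.ofReal).mulVec v = 0) :
    vecKron (fun _ : Fin m => (1 : ℂ)) v ≠ 0 ∧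
    ((W ⊗ₖ A).map Complex.ofReal).mulVec (vecKron (fun _ => (1 : ℂ)) v) =
      lam • vecKron (fun _ => (1 : ℂ)) v ∧
    (Cbar r C).mulVec (vecKron (fun _ => (1 : ℂ)) v) = 0 := by
  have hWrow : ∀ i : Fin m, (∑ k, W i k) = 1 := by
    intro i
    have := congrFun hW1 i
    simpa [Matrix.mulVec, dotProduct] using this
  refine ⟨?_, ?_, ?_⟩
  · intro h
    obtain ⟨j, hj⟩ : ∃ j, v j ≠ 0 := by
      by_contra hc
      push_neg at hc
      exact hv (funext hc)
    have := congrFun h (⟨0, hm⟩, j)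
    simp [vecKron] at this
    exact hj this
  · funext p
    obtain ⟨i, j⟩ := p
    have hA : (∑ l, (A j l : ℂ) * v l) = lam * v j := by
      have := congrFun hAv j
      simpa [Matrix.mulVec, dotProduct, Matrix.map_apply] using this
    calc (∑ p : Fin m × Fin n, (((W ⊗ₖ A).map Complex.ofReal) (i, j) p) *
            vecKron (fun _ => (1 : ℂ)) v p)
        = ∑ k, ∑ l, ((W i k : ℂ) * (A j l : ℂ)) * v l := by
          rw [Fintype.sum_prod_type]
          simp [vecKron, Matrix.kroneckerMap_apply, Matrix.map_apply, mul_assoc]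
      _ = (∑ k, (W i k : ℂ)) * (∑ l, (A j l : ℂ) * v l) := by
          rw [Finset.sum_mul_sum]
          simp [mul_assoc]
      _ = lam * v j := by
          rw [hA]
          norm_cast
          rw [hWrow i]
          simp
      _ = (lam • vecKron (fun _ => (1 : ℂ)) v) (i, j) := by simp [vecKron]
  · funext q
    obtain ⟨i, s⟩ := q
    have hC : (∑ l, ((C i) s l : ℂ) * v l) = 0 := by
      have := congrFun (hCv i) s
      simpa [Matrix.mulVec, dotProduct, Matrix.map_apply] using this
    calc (∑ p : Fin m × Fin n, Cbar r C ⟨i, s⟩ p * vecKron (fun _ => (1 : ℂ)) v p)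
        = ∑ k, ∑ l, (if i = k then ((C i) s l : ℂ) * v l else 0) := by
          rw [Fintype.sum_prod_type]
          simp [Cbar, vecKron, Matrix.map_apply, ite_mul]
      _ = 0 := by simp [hC]
end
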